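/- Let g be a Lie triple system over a field F with char F ≠ 2, 3 and N : g → g a Nijenhuis operator. Then for all integers k, r > 0 and all x1,x2,x3 ∈ g one has [x1,x2,x3]_{N^{k+r}} = ([·,·,·]_{N^k})_{N^r}(x1,x2,x3), where b_M(x,y,z) := b(Mx,y,z) + b(x,My,z) + b(x,y,Mz) − M(b(x,y,z)) for a trilinear map b and linear map M, [·,·,·]_M is this construction applied to the bracket of g, and ([·,·,·]_{N^k})_{N^r} is the construction applied with the map N^r to the trilinear map [·,·,·]_{N^k}. -/
import Mathlib
set_option maxHeartbeats 1000000

section aux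
variable {F : Type*} [Field F] {g : Type*} [AddCommGroup g] [Module F g]
variable (t : g → g → g → g) (N : Module.End F g)

def uu (a : ℕ) (x y z : g) : g :=
  t ((N ^ a) x) y z + t x ((N ^ a) y) z + t x y ((N ^ a) z)

def Vv (a b : ℕ) (x y z : g) : g :=
  t ((N ^ a) x) ((N ^ b) y) z + t ((N ^ b) x) ((N ^ a) y) z +
  t ((N ^ a) x) y ((N ^ b) z) + t ((N ^ b) x) y ((N ^ a) z) +
  t x ((N ^ a) y) ((N ^ b) z) + t x ((N ^ b) y) ((N ^ a) z)

def HH (a b : ℕ) (x y z : g) : g :=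
  Vv t N a b x y z - (N ^ a) (uu t N b x y z) - (N ^ b) (uu t N a x y z)
    + (N ^ (a + b)) (t x y z) + (N ^ (a + b)) (t x y z)

variable
 (hN1 : ∀ x y z : g, t (N x) (N y) (N z) = 0)
 (hN2 : ∀ x y z : g, N (N (t x y z)) =
      N (t (N x) y z) + N (t x (N y) z) + N (t x y (N z)) -
        t (N x) (N y) z - t (N x) y (N z) - t x (N y) (N z))

theorem hcomm (m : ℕ) (v : g) : N ((N ^ m) v) = (N ^ (m+1)) v := by
  rw [pow_succ']; rfl

theorem hcomm2 (a b : ℕ) (v : g) : (N ^ a) ((N ^ b) v) = (N ^ (a + b)) v := by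
  rw [← Module.End.mul_apply, ← pow_add]

include hN1 in
theorem hZ (a b c : ℕ) (x y z : g) :
    t ((N ^ (a+1)) x) ((N ^ (b+1)) y) ((N ^ (c+1)) z) = 0 := by
  have := hN1 ((N ^ a) x) ((N ^ b) y) ((N ^ c) z)
  simpa only [hcomm] using this

include hN2 in
theorem N2' (a b c : ℕ) (x y z : g) :
    N (N (t ((N^a) x) ((N^b) y) ((N^c) z))) =
      N (t ((N^(a+1)) x) ((N^b) y) ((N^c) z)) + N (t ((N^a) x) ((N^(b+1)) y) ((N^c) z))
        + N (t ((N^a) x) ((N^b) y) ((N^(c+1)) z))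
      - t ((N^(a+1)) x) ((N^(b+1)) y) ((N^c) z) - t ((N^(a+1)) x) ((N^b) y) ((N^(c+1)) z)
      - t ((N^a) x) ((N^(b+1)) y) ((N^(c+1)) z) := by
  have := hN2 ((N ^ a) x) ((N ^ b) y) ((N ^ c) z)
  simpa only [hcomm] using this

include hN1 hN2 in
theorem lemI (a : ℕ) (x y z : g) :
    N (N (uu t N (a+1) x y z)) =
      N (uu t N (a+2) x y z) + N (Vv t N (a+1) 1 x y z) - Vv t N (a+2) 1 x y z := by
  have h1 := N2' t N hN2 (a+1) 0 0 x y z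
  have h2 := N2' t N hN2 0 (a+1) 0 x y z
  have h3 := N2' t N hN2 0 0 (a+1) x y z
  have z1 : t ((N^(a+1)) x) ((N^1) y) ((N^1) z) = 0 := hZ t N hN1 a 0 0 x y z
  have z2 : t ((N^1) x) ((N^(a+1)) y) ((N^1) z) = 0 := hZ t N hN1 0 a 0 x y z
  have z3 : t ((N^1) x) ((N^1) y) ((N^(a+1)) z) = 0 := hZ t N hN1 0 0 a x y z
  simp only [pow_zero, Module.End.one_apply, Nat.zero_add,
    show a+1+1 = a+2 from rfl] at h1 h2 h3
  simp only [uu, Vv, map_add]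
  rw [h1, h2, h3]
  simp only [z1, z2, z3, hZ t N hN1 a 0 0, hZ t N hN1 0 a 0, hZ t N hN1 0 0 a]
  abel

include hN1 hN2 in
theorem lemIII (a b : ℕ) (x y z : g) :
    N (N (Vv t N (a+1) (b+1) x y z)) =
      N (Vv t N (a+2) (b+1) x y z) + N (Vv t N (a+1) (b+2) x y z) - Vv t N (a+2) (b+2) x y z := by
  have h1 := N2' t N hN2 (a+1) (b+1) (0) x y z
  have h2 := N2' t N hN2 (b+1) (a+1) (0) x y z
  have h3 := N2' t N hN2 (a+1) (0) (b+1) x y z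
  have h4 := N2' t N hN2 (b+1) (0) (a+1) x y z
  have h5 := N2' t N hN2 (0) (a+1) (b+1) x y z
  have h6 := N2' t N hN2 (0) (b+1) (a+1) x y z
  have z1 : t ((N^(a+1)) x) ((N^(b+1)) y) ((N^(1)) z) = 0 := hZ t N hN1 a b 0 x y z
  have z2 : t ((N^(a+2)) x) ((N^(b+1)) y) ((N^(1)) z) = 0 := hZ t N hN1 (a+1) b 0 x y z
  have z3 : t ((N^(a+1)) x) ((N^(b+2)) y) ((N^(1)) z) = 0 := hZ t N hN1 a (b+1) 0 x y z
  have z4 : t ((N^(b+1)) x) ((N^(a+1)) y) ((N^(1)) z) = 0 := hZ t N hN1 b a 0 x y z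
  have z5 : t ((N^(b+2)) x) ((N^(a+1)) y) ((N^(1)) z) = 0 := hZ t N hN1 (b+1) a 0 x y z
  have z6 : t ((N^(b+1)) x) ((N^(a+2)) y) ((N^(1)) z) = 0 := hZ t N hN1 b (a+1) 0 x y z
  have z7 : t ((N^(a+1)) x) ((N^(1)) y) ((N^(b+1)) z) = 0 := hZ t N hN1 a 0 b x y z
  have z8 : t ((N^(a+2)) x) ((N^(1)) y) ((N^(b+1)) z) = 0 := hZ t N hN1 (a+1) 0 b x y z
  have z9 : t ((N^(a+1)) x) ((N^(1)) y) ((N^(b+2)) z) = 0 := hZ t N hN1 a 0 (b+1) x y z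
  have z10 : t ((N^(b+1)) x) ((N^(1)) y) ((N^(a+1)) z) = 0 := hZ t N hN1 b 0 a x y z
  have z11 : t ((N^(b+2)) x) ((N^(1)) y) ((N^(a+1)) z) = 0 := hZ t N hN1 (b+1) 0 a x y z
  have z12 : t ((N^(b+1)) x) ((N^(1)) y) ((N^(a+2)) z) = 0 := hZ t N hN1 b 0 (a+1) x y z
  have z13 : t ((N^(1)) x) ((N^(a+1)) y) ((N^(b+1)) z) = 0 := hZ t N hN1 0 a b x y z
  have z14 : t ((N^(1)) x) ((N^(a+2)) y) ((N^(b+1)) z) = 0 := hZ t N hN1 0 (a+1) b x y z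
  have z15 : t ((N^(1)) x) ((N^(a+1)) y) ((N^(b+2)) z) = 0 := hZ t N hN1 0 a (b+1) x y z
  have z16 : t ((N^(1)) x) ((N^(b+1)) y) ((N^(a+1)) z) = 0 := hZ t N hN1 0 b a x y z
  have z17 : t ((N^(1)) x) ((N^(b+2)) y) ((N^(a+1)) z) = 0 := hZ t N hN1 0 (b+1) a x y z
  have z18 : t ((N^(1)) x) ((N^(b+1)) y) ((N^(a+2)) z) = 0 := hZ t N hN1 0 b (a+1) x y z
  -- zcount: 18
  simp only [pow_zero, Module.End.one_apply, Nat.zero_add,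
    show a+1+1 = a+2 from rfl, show b+1+1 = b+2 from rfl] at h1 h2 h3 h4 h5 h6
  simp only [Vv, map_add]
  rw [h1, h2, h3, h4, h5, h6]
  simp only [z1, z2, z3, z4, z5, z6, z7, z8, z9, z10, z11, z12, z13, z14, z15, z16, z17, z18, map_zero]
  abel

theorem hpow1 (v : g) : N v = (N^1) v := by rw [pow_one]

theorem hsq (v : g) : N (N v) = (N^2) v := by rw [pow_two]; rfl

include hN2 in
theorem H11 (x y z : g) : HH t N 1 1 x y z = 0 := by
  have h := hN2 x y z
  simp only [HH, Vv, uu, pow_one, map_add]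
  rw [show ((1:ℕ)+1) = 2 from rfl, ← hsq N (t x y z), h]
  abel

include hN1 hN2 in
theorem Hstep1 (k : ℕ) (x y z : g) :
    HH t N (k+2) 1 x y z = N (HH t N (k+1) 1 x y z) := by
  have hI := lemI t N hN1 hN2 k x y z
  rw [hsq] at hI
  simp only [HH, map_add, map_sub, hcomm, pow_one]
  simp only [show k+2+1 = k+3 by omega, show (1:ℕ)+1 = 2 by omega,
    show k+1+1 = k+2 by omega, show k+1+1+1 = k+3 by omega]
  rw [hsq N (uu t N (k+1) x y z), hI]
  abel

include hN1 hN2 in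
theorem Hrow1 (k : ℕ) (x y z : g) : HH t N (k+1) 1 x y z = 0 := by
  induction k with
  | zero => exact H11 t N hN2 x y z
  | succ n ih =>
    rw [show n+1+1 = n+2 from rfl, Hstep1 t N hN1 hN2 n x y z, ih, map_zero]

theorem Hsymm (a b : ℕ) (x y z : g) : HH t N a b x y z = HH t N b a x y z := by
  simp only [HH, Vv]
  rw [Nat.add_comm b a]
  abel

include hN1 hN2 in
theorem Hrec (k r : ℕ) (x y z : g) :
    HH t N (k+2) (r+2) x y z =
      N (HH t N (k+2) (r+1) x y z) + N (HH t N (k+1) (r+2) x y z)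
        - N (N (HH t N (k+1) (r+1) x y z)) := by
  have hIII := lemIII t N hN1 hN2 k r x y z
  rw [hsq] at hIII
  simp only [HH, map_add, map_sub, hcomm]
  rw [hsq N (Vv t N (k+1) (r+1) x y z), hIII]
  simp only [show k+2+1 = k+3 by omega, show r+2+1 = r+3 by omega,
    show k+1+1 = k+2 by omega, show r+1+1 = r+2 by omega,
    show k+1+1+1 = k+3 by omega, show r+1+1+1 = r+3 by omega,
    show k+2+(r+2) = k+r+4 by omega, show k+2+(r+1)+1 = k+r+4 by omega,
    show k+1+(r+2)+1 = k+r+4 by omega, show k+1+(r+1)+1+1 = k+r+4 by omega,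
    show r+1+(k+2) = k+r+3 by omega, show r+2+(k+1) = k+r+3 by omega]
  abel

include hN1 hN2 in
theorem Hzero : ∀ r k : ℕ, ∀ x y z : g, HH t N (k+1) (r+1) x y z = 0 := by
  intro r
  induction r with
  | zero => intro k x y z; exact Hrow1 t N hN1 hN2 k x y z
  | succ m ihr =>
    intro k
    induction k with
    | zero =>
      intro x y z
      rw [Hsymm]
      exact Hrow1 t N hN1 hN2 (m+1) x y z
    | succ n ihk =>
      intro x y z
      have e1 : HH t N (n+2) (m+1) x y z = 0 := ihr (n+1) x y z
      have e2 : HH t N (n+1) (m+2) x y z = 0 := ihk x y z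
      have e3 : HH t N (n+1) (m+1) x y z = 0 := ihr n x y z
      have := Hrec t N hN1 hN2 n m x y z
      rw [e1, e2, e3] at this
      simpa using this

end aux



/-- `N` is a Nijenhuis operator for the Lie triple system bracket `t`. -/
def IsNijenhuis {F : Type*} [Field F] {g : Type*} [AddCommGroup g] [Module F g]
    (t : g →ₗ[F] g →ₗ[F] g →ₗ[F] g) (N : Module.End F g) : Prop :=
  (∀ x y z : g, t (N x) (N y) (N z) = 0) ∧
  (∀ x y z : g,
    N (N (t x y z)) =
      N (t (N x) y z) + N (t x (N y) z) + N (t x y (N z)) -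
        t (N x) (N y) z - t (N x) y (N z) - t x (N y) (N z))

/-- The deformed trilinear map `b_M(x,y,z) = b(Mx,y,z)+b(x,My,z)+b(x,y,Mz)−M(b(x,y,z))`. -/
def deform {g : Type*} [AddCommGroup g] (b : g → g → g → g) (M : g → g) :
    g → g → g → g :=
  fun x y z => b (M x) y z + b x (M y) z + b x y (M z) - M (b x y z)

/- STATEMENT 8: for a Nijenhuis operator N and k, r > 0,
[x1,x2,x3]_{N^{k+r}} = ([·,·,·]_{N^k})_{N^r} (x1,x2,x3). -/
theorem deform_pow_add {F : Type*} [Field F]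
    (hchar2 : (2 : F) ≠ 0) (hchar3 : (3 : F) ≠ 0)
    {g : Type*} [AddCommGroup g] [Module F g]
    (t : g →ₗ[F] g →ₗ[F] g →ₗ[F] g)
    (hskew : ∀ x y : g, t x x y = 0)
    (hjac : ∀ x y z : g, t x y z + t y z x + t z x y = 0)
    (hfund : ∀ x y a b c : g,
      t x y (t a b c) = t (t x y a) b c + t a (t x y b) c + t a b (t x y c))
    (N : Module.End F g) (hN : IsNijenhuis t N) :
    ∀ k r : ℕ, 0 < k → 0 < r → ∀ x1 x2 x3 : g,
      deform (fun x y z => t x y z) (⇑(N ^ (k + r))) x1 x2 x3 =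
        deform (deform (fun x y z => t x y z) (⇑(N ^ k))) (⇑(N ^ r)) x1 x2 x3 := by
  intro k r hk hr x1 x2 x3
  obtain ⟨a, rfl⟩ : ∃ a, k = a + 1 := ⟨k - 1, by omega⟩
  obtain ⟨b, rfl⟩ : ∃ b, r = b + 1 := ⟨r - 1, by omega⟩
  have h : HH (fun x y z => t x y z) N (a+1) (b+1) x1 x2 x3 = 0 :=
    Hzero (fun x y z => t x y z) N hN.1 hN.2 b a x1 x2 x3
  symm
  rw [← sub_eq_zero, ← h]
  simp only [HH, Vv, uu, deform, map_add, map_sub, hcomm2]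
  simp only [show b+1+(a+1) = a+1+(b+1) by omega]
  abel
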